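/- Let G be a finite simple graph and v a vertex of G such that there exists u ∈ N_G(v) with deg_G(u) ≥ deg_G(v). If S is a strong dominating set of the vertex-deleted graph G − v, then S ∪ N_G(v) is a strong dominating set of G; consequently γst(G) ≤ γst(G − v) + deg_G(v). -/

import Mathlib

/-- The degree of a vertex `x` in a graph `G`. -/
noncomputable def sdeg {V : Type*} (G : SimpleGraph V) (x : V) : ℕ :=
  (G.neighborSet x).ncard

/-- `D` is a strong dominating set of `G`: every vertex `x ∉ D` has a neighbor
`y ∈ D` with `deg x ≤ deg y`. -/
def IsStrongDominating {V : Type*} (G : SimpleGraph V) (D : Set V) : Prop :=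
  ∀ x ∉ D, ∃ y ∈ D, G.Adj x y ∧ sdeg G x ≤ sdeg G y

/-- The strong domination number of `G`. -/
noncomputable def sdn {V : Type*} (G : SimpleGraph V) : ℕ :=
  sInf {n | ∃ D : Set V, IsStrongDominating G D ∧ D.ncard = n}

/-- Vertex deletion `G - v`: the induced subgraph on the complement of `{v}`. -/
def delVtx {V : Type*} (G : SimpleGraph V) (v : V) : SimpleGraph {x : V // x ≠ v} where
  Adj a b := G.Adj a.1 b.1
  symm := ⟨fun a b h => G.symm.symm _ _ h⟩
  loopless := ⟨fun a h => G.loopless.irrefl a.1 h⟩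

/-- Vertex contraction `G / v`: delete `v` and put a clique on its open neighborhood. -/
def contractVtx {V : Type*} (G : SimpleGraph V) (v : V) : SimpleGraph {x : V // x ≠ v} where
  Adj a b := a ≠ b ∧ (G.Adj a.1 b.1 ∨ (G.Adj v a.1 ∧ G.Adj v b.1))
  symm := by
    refine ⟨?_⟩
    rintro a b ⟨hab, h | ⟨ha, hb⟩⟩
    · exact ⟨hab.symm, Or.inl h.symm⟩
    · exact ⟨hab.symm, Or.inr ⟨hb, ha⟩⟩
  loopless := by refine ⟨?_⟩; rintro a ⟨h, -⟩; exact h rfl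

/-- `G ⊙ v`: remove all edges between any pair of neighbors of `v`. -/
def odotVtx {V : Type*} (G : SimpleGraph V) (v : V) : SimpleGraph V where
  Adj x y := G.Adj x y ∧ ¬(G.Adj v x ∧ G.Adj v y)
  symm := by
    refine ⟨?_⟩
    rintro x y ⟨h, hn⟩
    exact ⟨h.symm, fun hc => hn ⟨hc.2, hc.1⟩⟩
  loopless := by refine ⟨?_⟩; rintro x ⟨h, -⟩; exact G.loopless.irrefl x h

/-- Edge contraction `G / uv`: merge `v` into `u`. -/
def contractEdge {V : Type*} (G : SimpleGraph V) (u v : V) : SimpleGraph {x : V // x ≠ v} where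
  Adj a b := a ≠ b ∧ (G.Adj a.1 b.1 ∨ (a.1 = u ∧ G.Adj v b.1) ∨ (b.1 = u ∧ G.Adj v a.1))
  symm := by
    refine ⟨?_⟩
    rintro a b ⟨hab, h | h | h⟩
    · exact ⟨hab.symm, Or.inl h.symm⟩
    · exact ⟨hab.symm, Or.inr (Or.inr h)⟩
    · exact ⟨hab.symm, Or.inr (Or.inl h)⟩
  loopless := by refine ⟨?_⟩; rintro a ⟨h, -⟩; exact h rfl

/-- The star `K_{1,n}` with center `none` and leaves `some i`. -/
def starG (n : ℕ) : SimpleGraph (Option (Fin n)) where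
  Adj a b := (a = none ∧ b ≠ none) ∨ (a ≠ none ∧ b = none)
  symm := by
    refine ⟨?_⟩
    rintro a b (⟨h1, h2⟩ | ⟨h1, h2⟩)
    · exact Or.inr ⟨h2, h1⟩
    · exact Or.inl ⟨h2, h1⟩
  loopless := by
    refine ⟨?_⟩
    rintro a (⟨h1, h2⟩ | ⟨h1, h2⟩)
    exacts [h2 h1, h1 h2]

/-- The path graph `P_n` on vertices `0, …, n-1`, consecutive integers adjacent. -/
def pathG (n : ℕ) : SimpleGraph (Fin n) where
  Adj i j := i.1 + 1 = j.1 ∨ j.1 + 1 = i.1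
  symm := ⟨fun i j h => h.symm⟩
  loopless := by refine ⟨?_⟩; rintro i (h | h) <;> omega

lemma delVtx_neighborSet {V : Type*} (G : SimpleGraph V) (v : V) (a : {x : V // x ≠ v}) :
    (delVtx G v).neighborSet a = Subtype.val ⁻¹' (G.neighborSet a.1) := rfl

lemma sdeg_delVtx {V : Type*} [Fintype V] (G : SimpleGraph V) (v : V) (a : {x : V // x ≠ v}) :
    sdeg (delVtx G v) a = (G.neighborSet a.1 \ {v}).ncard := by
  unfold sdeg
  rw [delVtx_neighborSet, ← Set.ncard_image_of_injective _ Subtype.val_injective,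
    Set.image_preimage_eq_inter_range, Subtype.range_coe_subtype]
  rfl

lemma sdeg_delVtx_le {V : Type*} [Fintype V] (G : SimpleGraph V) (v : V)
    (a : {x : V // x ≠ v}) : sdeg (delVtx G v) a ≤ sdeg G a.1 := by
  rw [sdeg_delVtx]
  exact Set.ncard_le_ncard (Set.diff_subset) (Set.toFinite _)

lemma sdeg_delVtx_eq {V : Type*} [Fintype V] (G : SimpleGraph V) (v : V)
    (a : {x : V // x ≠ v}) (h : ¬ G.Adj a.1 v) : sdeg (delVtx G v) a = sdeg G a.1 := by
  rw [sdeg_delVtx]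
  unfold sdeg
  congr 1
  apply Set.diff_singleton_eq_self
  intro hx
  exact h hx

lemma key_strongDominating {V : Type*} [Fintype V] (G : SimpleGraph V)
    (v : V) (hv : ∃ u ∈ G.neighborSet v, sdeg G v ≤ sdeg G u)
    (S : Set {x : V // x ≠ v}) (hS : IsStrongDominating (delVtx G v) S) :
    IsStrongDominating G (Subtype.val '' S ∪ G.neighborSet v) := by
  intro x hx
  rw [Set.mem_union, not_or] at hx
  obtain ⟨hx1, hx2⟩ := hx
  by_cases hxv : x = v
  · obtain ⟨u, hu, hdeg⟩ := hv
    exact ⟨u, Or.inr hu, hxv ▸ hu, hxv ▸ hdeg⟩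
  · have hxS : (⟨x, hxv⟩ : {x : V // x ≠ v}) ∉ S := fun h => hx1 ⟨_, h, rfl⟩
    obtain ⟨y, hy, hadj, hdeg⟩ := hS ⟨x, hxv⟩ hxS
    refine ⟨y.1, Or.inl ⟨y, hy, rfl⟩, hadj, ?_⟩
    have h1 : sdeg (delVtx G v) ⟨x, hxv⟩ = sdeg G x := by
      apply sdeg_delVtx_eq
      intro h
      exact hx2 h.symm
    calc sdeg G x = sdeg (delVtx G v) ⟨x, hxv⟩ := h1.symm
      _ ≤ sdeg (delVtx G v) y := hdeg
      _ ≤ sdeg G y.1 := sdeg_delVtx_le G v y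

/-- if some neighbor u of v has deg_G(u) ≥ deg_G(v) and S is a strong
dominating set of G − v, then S ∪ N_G(v) is a strong dominating set of G; consequently
γst(G) ≤ γst(G − v) + deg_G(v). -/
theorem strongDominating_union_neighborSet {V : Type*} [Fintype V] (G : SimpleGraph V)
    (v : V) (hv : ∃ u ∈ G.neighborSet v, sdeg G v ≤ sdeg G u)
    (S : Set {x : V // x ≠ v}) (hS : IsStrongDominating (delVtx G v) S) :
    IsStrongDominating G (Subtype.val '' S ∪ G.neighborSet v) ∧
    sdn G ≤ sdn (delVtx G v) + sdeg G v := by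
  refine ⟨key_strongDominating G v hv S hS, ?_⟩
  have hne : {n | ∃ D : Set {x : V // x ≠ v}, IsStrongDominating (delVtx G v) D ∧
      D.ncard = n}.Nonempty :=
    ⟨(Set.univ : Set {x : V // x ≠ v}).ncard, Set.univ, fun x hx => absurd (Set.mem_univ x) hx,
      rfl⟩
  obtain ⟨S₀, hS₀, hcard⟩ := Nat.sInf_mem hne
  have hdom := key_strongDominating G v hv S₀ hS₀
  have h1 : sdn G ≤ (Subtype.val '' S₀ ∪ G.neighborSet v).ncard :=
    Nat.sInf_le ⟨_, hdom, rfl⟩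
  calc sdn G ≤ (Subtype.val '' S₀ ∪ G.neighborSet v).ncard := h1
    _ ≤ (Subtype.val '' S₀).ncard + (G.neighborSet v).ncard := Set.ncard_union_le _ _
    _ = S₀.ncard + sdeg G v := by
        rw [Set.ncard_image_of_injective _ Subtype.val_injective]; rfl
    _ = sdn (delVtx G v) + sdeg G v := by rw [hcard]; rfl
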